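/- For all integers k ≥ 1 and ℓ ≥ 0 with 10ℓ ≤ k, the 1-subdivision of the elementary cylindrical wall of height k and width k is (100ℓ², ℓ)-unbreakable. -/

import Mathlib

/-- A separation of a graph `G`: a pair of vertex sets `(A, B)` with `A ∪ B = V(G)` such
that no edge of `G` has one endpoint in `A \ B` and the other in `B \ A`. -/
def IsSeparation {V : Type*} (G : SimpleGraph V) (A B : Set V) : Prop :=
  A ∪ B = Set.univ ∧ ∀ ⦃u v : V⦄, G.Adj u v → u ∈ A \ B → v ∉ B \ A

/-- `G` is `(q,k)`-unbreakable: every separation of order at most `k` has a side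
of size at most `q`. -/
def Unbreakable {V : Type*} (G : SimpleGraph V) (q k : ℕ) : Prop :=
  ∀ A B : Set V, IsSeparation G A B → (A ∩ B).ncard ≤ k → A.ncard ≤ q ∨ B.ncard ≤ q

/-- The elementary cylindrical wall of height `h` and width `w`, on vertices
`(i, j)` (`0`-indexed rows `i`, columns `j`): each row is a cycle on `2w` vertices
(consecutive columns plus the wrap-around edge), and there is a vertical edge between
rows `i` and `i+1` in column `j` exactly when `i` and `j` have the same parity
(which corresponds to edges `v_{i,2j-1}v_{i+1,2j-1}` for odd rows and
`v_{i,2j}v_{i+1,2j}` for even rows in the 1-indexed description). -/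
def cylWall (h w : ℕ) : SimpleGraph (Fin h × Fin (2 * w)) :=
  SimpleGraph.fromRel (fun a b =>
    (a.1 = b.1 ∧ (b.2 : ℕ) = (a.2 : ℕ) + 1) ∨
    (a.1 = b.1 ∧ (a.2 : ℕ) = 2 * w - 1 ∧ (b.2 : ℕ) = 0) ∨
    ((b.1 : ℕ) = (a.1 : ℕ) + 1 ∧ a.2 = b.2 ∧ (a.1 : ℕ) % 2 = (a.2 : ℕ) % 2))

/-- The 1-subdivision of `G`: vertex set `V(G) ⊎ E(G)`, where a vertex `v` of `G` is
adjacent to an edge `e` of `G` if and only if `v` is an endpoint of `e`. -/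
def OneSubdivision {V : Type*} (G : SimpleGraph V) : SimpleGraph (V ⊕ ↥G.edgeSet) :=
  SimpleGraph.fromRel (fun a b =>
    match a, b with
    | Sum.inl v, Sum.inr e => v ∈ (e : Sym2 V)
    | _, _ => False)

namespace SubdivCylWallAux

variable {k : ℕ}

lemma oneSub_adj {V : Type*} (G : SimpleGraph V) (u : V) (e : G.edgeSet) :
    (OneSubdivision G).Adj (Sum.inl u) (Sum.inr e) ↔ u ∈ (e : Sym2 V) := by
  simp [OneSubdivision, SimpleGraph.fromRel_adj]

lemma cyl_adj_horiz (i : Fin k) (j j' : Fin (2*k)) (h : (j' : ℕ) = (j : ℕ) + 1) :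
    (cylWall k k).Adj (i, j) (i, j') := by
  refine ⟨?_, Or.inl (Or.inl ⟨rfl, h⟩)⟩
  simp only [ne_eq, Prod.mk.injEq]
  rintro ⟨-, rfl⟩; omega

lemma cyl_adj_vert (i i' : Fin k) (j : Fin (2*k)) (h : (i' : ℕ) = (i : ℕ) + 1)
    (hp : (i : ℕ) % 2 = (j : ℕ) % 2) :
    (cylWall k k).Adj (i, j) (i', j) := by
  refine ⟨?_, Or.inl (Or.inr (Or.inr ⟨h, rfl, hp⟩))⟩
  simp only [ne_eq, Prod.mk.injEq]
  rintro ⟨rfl, -⟩; omega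

lemma cyl_adj_cases {a b : Fin k × Fin (2*k)} (h : (cylWall k k).Adj a b) :
    (a.1 = b.1 ∧ ((b.2:ℕ) = (a.2:ℕ)+1 ∨ (a.2:ℕ) = (b.2:ℕ)+1
        ∨ ((a.2:ℕ) = 2*k-1 ∧ (b.2:ℕ) = 0) ∨ ((b.2:ℕ) = 2*k-1 ∧ (a.2:ℕ) = 0)))
    ∨ (a.2 = b.2 ∧ (((b.1:ℕ) = (a.1:ℕ)+1 ∧ (a.1:ℕ)%2 = (a.2:ℕ)%2)
        ∨ ((a.1:ℕ) = (b.1:ℕ)+1 ∧ (b.1:ℕ)%2 = (b.2:ℕ)%2))) := by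
  obtain ⟨hne, h | h⟩ := h
  · rcases h with ⟨h1, h2⟩ | ⟨h1, h2, h3⟩ | ⟨h1, h2, h3⟩
    · exact Or.inl ⟨h1, Or.inl h2⟩
    · exact Or.inl ⟨h1, Or.inr (Or.inr (Or.inl ⟨h2, h3⟩))⟩
    · exact Or.inr ⟨h2, Or.inl ⟨h1, h3⟩⟩
  · rcases h with ⟨h1, h2⟩ | ⟨h1, h2, h3⟩ | ⟨h1, h2, h3⟩
    · exact Or.inl ⟨h1.symm, Or.inr (Or.inl h2)⟩
    · exact Or.inl ⟨h1.symm, Or.inr (Or.inr (Or.inr ⟨h2, h3⟩))⟩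
    · exact Or.inr ⟨h2.symm, Or.inr ⟨h1, h3⟩⟩

open Finset in
def rowsE {k : ℕ} : Sym2 (Fin k × Fin (2*k)) → Finset ℕ :=
  Sym2.lift ⟨fun a b => {(a.1 : ℕ), (b.1 : ℕ)}, fun a b => Finset.pair_comm _ _⟩

def pairsE {k : ℕ} : Sym2 (Fin k × Fin (2*k)) → Finset ℕ :=
  Sym2.lift ⟨fun a b => {(a.2 : ℕ)/2, (b.2 : ℕ)/2}, fun a b => Finset.pair_comm _ _⟩

def minRowE {k : ℕ} : Sym2 (Fin k × Fin (2*k)) → ℕ :=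
  Sym2.lift ⟨fun a b => min (a.1 : ℕ) (b.1 : ℕ), fun a b => min_comm _ _⟩

def cMinE {k : ℕ} : Sym2 (Fin k × Fin (2*k)) → ℕ :=
  Sym2.lift ⟨fun a b => min (a.2 : ℕ) (b.2 : ℕ), fun a b => min_comm _ _⟩

def cMaxE {k : ℕ} : Sym2 (Fin k × Fin (2*k)) → ℕ :=
  Sym2.lift ⟨fun a b => max (a.2 : ℕ) (b.2 : ℕ), fun a b => max_comm _ _⟩

@[simp] lemma rowsE_mk (a b : Fin k × Fin (2*k)) : rowsE s(a,b) = {(a.1:ℕ), (b.1:ℕ)} := rfl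
@[simp] lemma pairsE_mk (a b : Fin k × Fin (2*k)) : pairsE s(a,b) = {(a.2:ℕ)/2, (b.2:ℕ)/2} := rfl
@[simp] lemma minRowE_mk (a b : Fin k × Fin (2*k)) : minRowE s(a,b) = min (a.1:ℕ) (b.1:ℕ) := rfl
@[simp] lemma cMinE_mk (a b : Fin k × Fin (2*k)) : cMinE s(a,b) = min (a.2:ℕ) (b.2:ℕ) := rfl
@[simp] lemma cMaxE_mk (a b : Fin k × Fin (2*k)) : cMaxE s(a,b) = max (a.2:ℕ) (b.2:ℕ) := rfl

/-- Normal form for edges of the cylindrical wall. -/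
def NF {k : ℕ} (u v : Fin k × Fin (2*k)) : Prop :=
  ((u.1:ℕ) = (v.1:ℕ) ∧ ((v.2:ℕ) = (u.2:ℕ)+1 ∨ (1 < k ∧ (u.2:ℕ) = 2*k-1 ∧ (v.2:ℕ) = 0)))
  ∨ ((u.2:ℕ) = (v.2:ℕ) ∧ (v.1:ℕ) = (u.1:ℕ)+1 ∧ (u.1:ℕ)%2 = (u.2:ℕ)%2)

lemma edge_nf (e : (cylWall k k).edgeSet) :
    ∃ u v : Fin k × Fin (2*k), (e : Sym2 _) = s(u,v) ∧ NF u v := by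
  obtain ⟨e, he⟩ := e
  induction e using Sym2.ind with
  | _ a b =>
    rw [SimpleGraph.mem_edgeSet] at he
    have hk : 0 < k := (a.1).pos
    have ha2 := (a.2).isLt
    have hb2 := (b.2).isLt
    rcases cyl_adj_cases he with ⟨h1, h2⟩ | ⟨h1, h2⟩
    · rcases h2 with h2 | h2 | ⟨h2, h3⟩ | ⟨h2, h3⟩
      · exact ⟨a, b, rfl, Or.inl ⟨congrArg Fin.val h1, Or.inl h2⟩⟩
      · exact ⟨b, a, Sym2.eq_swap, Or.inl ⟨congrArg Fin.val h1.symm, Or.inl h2⟩⟩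
      · rcases Nat.lt_or_ge 1 k with hk1 | hk1
        · exact ⟨a, b, rfl, Or.inl ⟨congrArg Fin.val h1, Or.inr ⟨hk1, h2, h3⟩⟩⟩
        · -- k = 1 : the wrap edge is a +1 edge in the other orientation
          exact ⟨b, a, Sym2.eq_swap, Or.inl ⟨congrArg Fin.val h1.symm, Or.inl (by omega)⟩⟩
      · rcases Nat.lt_or_ge 1 k with hk1 | hk1
        · exact ⟨b, a, Sym2.eq_swap, Or.inl ⟨congrArg Fin.val h1.symm, Or.inr ⟨hk1, h2, h3⟩⟩⟩
        · exact ⟨a, b, rfl, Or.inl ⟨congrArg Fin.val h1, Or.inl (by omega)⟩⟩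
    · rcases h2 with ⟨h2, h3⟩ | ⟨h2, h3⟩
      · exact ⟨a, b, rfl, Or.inr ⟨congrArg Fin.val h1, h2, h3⟩⟩
      · exact ⟨b, a, Sym2.eq_swap, Or.inr ⟨congrArg Fin.val h1.symm, h2, h3⟩⟩

abbrev Vk (k : ℕ) := (Fin k × Fin (2*k)) ⊕ ↥(cylWall k k).edgeSet

def gmap : Vk k → ℕ × ℕ × ℕ
  | .inl (i, j) => ((i:ℕ), (j:ℕ)/2, (j:ℕ)%2)
  | .inr e => (minRowE e.val, cMinE e.val / 2,
      if cMaxE e.val - cMinE e.val = 0 then 3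
      else if cMaxE e.val - cMinE e.val = 1 then
        (if cMinE e.val % 2 = 0 then 2 else 4)
      else 5)

set_option maxHeartbeats 2000000 in
lemma gmap_inj_aux {u1 v1 u2 v2 : Fin k × Fin (2*k)} (h1 : NF u1 v1) (h2 : NF u2 v2)
    (hr : min (u1.1:ℕ) (v1.1:ℕ) = min (u2.1:ℕ) (v2.1:ℕ))
    (hc : min (u1.2:ℕ) (v1.2:ℕ) / 2 = min (u2.2:ℕ) (v2.2:ℕ) / 2)
    (ht : (if max (u1.2:ℕ) (v1.2:ℕ) - min (u1.2:ℕ) (v1.2:ℕ) = 0 then 3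
      else if max (u1.2:ℕ) (v1.2:ℕ) - min (u1.2:ℕ) (v1.2:ℕ) = 1 then
        (if min (u1.2:ℕ) (v1.2:ℕ) % 2 = 0 then 2 else 4) else 5)
      = (if max (u2.2:ℕ) (v2.2:ℕ) - min (u2.2:ℕ) (v2.2:ℕ) = 0 then 3
      else if max (u2.2:ℕ) (v2.2:ℕ) - min (u2.2:ℕ) (v2.2:ℕ) = 1 then
        (if min (u2.2:ℕ) (v2.2:ℕ) % 2 = 0 then 2 else 4) else 5)) :
    u1 = u2 ∧ v1 = v2 := by
  have e1u2 := (u1.2).isLt; have e1v2 := (v1.2).isLt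
  have e2u2 := (u2.2).isLt; have e2v2 := (v2.2).isLt
  have e1u1 := (u1.1).isLt; have e1v1 := (v1.1).isLt
  have e2u1 := (u2.1).isLt; have e2v1 := (v2.1).isLt
  have key : (u1.1:ℕ) = u2.1 ∧ (u1.2:ℕ) = u2.2 ∧ (v1.1:ℕ) = v2.1 ∧ (v1.2:ℕ) = v2.2 := by
    rcases h1 with ⟨ha, hb | ⟨hk1, hb, hb'⟩⟩ | ⟨ha, hb, hp⟩ <;>
      rcases h2 with ⟨ha2, hb2 | ⟨hk2, hb2, hb2'⟩⟩ | ⟨ha2, hb2, hp2⟩ <;>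
      split_ifs at ht <;> omega
  refine ⟨Prod.ext ?_ ?_, Prod.ext ?_ ?_⟩ <;> apply Fin.ext <;> tauto
lemma gmap_injective : Function.Injective (gmap (k := k)) := by
  have tagBig : ∀ e : (cylWall k k).edgeSet, 2 ≤ (gmap (k := k) (Sum.inr e)).2.2 := by
    intro e
    show 2 ≤ (if _ then 3 else if _ then (if _ then 2 else 4) else 5)
    split_ifs <;> omega
  intro x y h
  match x, y with
  | .inl (i,j), .inl (i',j') =>
    simp only [gmap, Prod.mk.injEq] at h
    obtain ⟨h1, h2, h3⟩ := h
    have : (j:ℕ) = j' := by omega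
    exact congrArg Sum.inl (Prod.ext (Fin.ext h1) (Fin.ext this))
  | .inl (i,j), .inr e =>
    exfalso
    have := tagBig e
    rw [← h] at this
    simp only [gmap] at this
    omega
  | .inr e, .inl (i,j) =>
    exfalso
    have := tagBig e
    rw [h] at this
    simp only [gmap] at this
    omega
  | .inr e1, .inr e2 =>
    obtain ⟨u1, v1, he1, hnf1⟩ := edge_nf e1
    obtain ⟨u2, v2, he2, hnf2⟩ := edge_nf e2
    simp only [gmap, he1, he2, minRowE_mk, cMinE_mk, cMaxE_mk, Prod.mk.injEq] at h
    obtain ⟨hu, hv⟩ := gmap_inj_aux hnf1 hnf2 h.1 h.2.1 h.2.2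
    congr 1
    apply Subtype.ext
    rw [he1, he2, hu, hv]

def rowsV : Vk k → Finset ℕ
  | .inl (i, _) => {(i:ℕ)}
  | .inr e => rowsE e.val

def pairsV : Vk k → Finset ℕ
  | .inl (_, j) => {(j:ℕ)/2}
  | .inr e => pairsE e.val

def Rk (S : Set (Vk k)) (a b : Vk k) : Prop :=
  Relation.ReflTransGen
    (fun x y => (OneSubdivision (cylWall k k)).Adj x y ∧ x ∉ S ∧ y ∉ S) a b

lemma Rk.symm {S : Set (Vk k)} {a b : Vk k} (h : Rk S a b) : Rk S b a := by
  refine (@Relation.ReflTransGen.stdSymm _ _ ⟨?_⟩).symm _ _ h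
  rintro x y ⟨h1, h2, h3⟩
  exact ⟨h1.symm, h3, h2⟩

lemma Rk.trans {S : Set (Vk k)} {a b c : Vk k} (h : Rk S a b) (h' : Rk S b c) :
    Rk S a c := Relation.ReflTransGen.trans h h'

def SafeR (S : Set (Vk k)) (n : ℕ) : Prop := ∀ v ∈ S, n ∉ rowsV v
def SafeP (S : Set (Vk k)) (n : ℕ) : Prop := ∀ v ∈ S, n ∉ pairsV v

lemma SafeR.notMem {S : Set (Vk k)} {n : ℕ} (h : SafeR S n) {v : Vk k}
    (hv : n ∈ rowsV v) : v ∉ S := fun hm => h v hm hv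

lemma SafeP.notMem {S : Set (Vk k)} {n : ℕ} (h : SafeP S n) {v : Vk k}
    (hv : n ∈ pairsV v) : v ∉ S := fun hm => h v hm hv

lemma rel_step (S : Set (Vk k)) {u v : Fin k × Fin (2*k)} (h : (cylWall k k).Adj u v)
    (hu : (Sum.inl u : Vk k) ∉ S) (hv : (Sum.inl v : Vk k) ∉ S)
    (he : (Sum.inr ⟨s(u,v), h⟩ : Vk k) ∉ S) :
    Rk S (.inl u) (.inl v) := by
  refine Relation.ReflTransGen.tail (Relation.ReflTransGen.single ⟨?_, hu, he⟩) ⟨?_, he, hv⟩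
  · exact (oneSub_adj _ _ _).2 (Sym2.mem_mk_left u v)
  · exact ((oneSub_adj _ _ _).2 (Sym2.mem_mk_right u v)).symm

lemma row_walk {S : Set (Vk k)} {i : Fin k} (hi : SafeR S (i:ℕ)) (j j' : Fin (2*k)) :
    Rk S (.inl (i,j)) (.inl (i,j')) := by
  have hk : 0 < 2*k := lt_of_le_of_lt (Nat.zero_le _) j.isLt
  suffices aux : ∀ n (h : n < 2*k),
      Rk S (.inl (i, (⟨0, hk⟩ : Fin (2*k)))) (.inl (i, ⟨n, h⟩)) by
    have h1 := aux j j.isLt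
    have h2 := aux j' j'.isLt
    simp only [Fin.eta] at h1 h2
    exact h1.symm.trans h2
  intro n hn
  induction n with
  | zero => exact Relation.ReflTransGen.refl
  | succ m ih =>
    have hm : m < 2*k := by omega
    have hadj : (cylWall k k).Adj (i, ⟨m, hm⟩) (i, ⟨m+1, hn⟩) := cyl_adj_horiz _ _ _ rfl
    refine (ih hm).trans (rel_step S hadj ?_ ?_ ?_)
    · exact hi.notMem (by simp [rowsV])
    · exact hi.notMem (by simp [rowsV])
    · exact hi.notMem (by simp [rowsV, rowsE])

lemma pair_flip {S : Set (Vk k)} {p : ℕ} (hp : SafeP S p) (hpk : p < k) (i : Fin k) :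
    Rk S (.inl (i, ⟨2*p, by omega⟩)) (.inl (i, ⟨2*p+1, by omega⟩)) := by
  have hadj : (cylWall k k).Adj (i, ⟨2*p, by omega⟩) (i, ⟨2*p+1, by omega⟩) :=
    cyl_adj_horiz _ _ _ rfl
  refine rel_step S hadj ?_ ?_ ?_
  · exact hp.notMem (by simp [pairsV, Nat.mul_div_cancel_left])
  · exact hp.notMem (by simp [pairsV]; try omega)
  · exact hp.notMem (by simp [pairsV, pairsE]; try omega)

lemma pair_climb {S : Set (Vk k)} {p : ℕ} (hp : SafeP S p) (hpk : p < k)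
    (n : ℕ) (hn : n < k) :
    Rk S (.inl ((⟨0, by omega⟩ : Fin k), (⟨2*p, by omega⟩ : Fin (2*k))))
         (.inl ((⟨n, hn⟩ : Fin k), (⟨2*p, by omega⟩ : Fin (2*k)))) := by
  induction n with
  | zero => exact Relation.ReflTransGen.refl
  | succ m ih =>
    have hm : m < k := by omega
    have step : Rk S (.inl ((⟨m, hm⟩ : Fin k), (⟨2*p, by omega⟩ : Fin (2*k))))
        (.inl ((⟨m+1, hn⟩ : Fin k), (⟨2*p, by omega⟩ : Fin (2*k)))) := by
      rcases Nat.even_or_odd m with he | ho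
      · -- vertical at column 2p
        have hadj : (cylWall k k).Adj (⟨m, hm⟩, ⟨2*p, by omega⟩) (⟨m+1, hn⟩, ⟨2*p, by omega⟩) :=
          cyl_adj_vert _ _ _ rfl (by obtain ⟨t, ht⟩ := he; simp; omega)
        refine rel_step S hadj ?_ ?_ ?_
        · exact hp.notMem (by simp [pairsV, Nat.mul_div_cancel_left])
        · exact hp.notMem (by simp [pairsV, Nat.mul_div_cancel_left])
        · exact hp.notMem (by simp [pairsV, pairsE]; try omega)
      · -- go to column 2p+1, vertical there, come back
        have hadj : (cylWall k k).Adj (⟨m, hm⟩, ⟨2*p+1, by omega⟩)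
            (⟨m+1, hn⟩, ⟨2*p+1, by omega⟩) :=
          cyl_adj_vert _ _ _ rfl (by obtain ⟨t, ht⟩ := ho; simp; omega)
        refine ((pair_flip hp hpk _).trans (rel_step S hadj ?_ ?_ ?_)).trans
          (pair_flip hp hpk _).symm
        · exact hp.notMem (by simp [pairsV]; try omega)
        · exact hp.notMem (by simp [pairsV]; try omega)
        · exact hp.notMem (by simp [pairsV, pairsE]; try omega)
    exact (ih hm).trans step

lemma pair_walk {S : Set (Vk k)} {p : ℕ} (hp : SafeP S p) (hpk : p < k)
    (i i' : Fin k) (j j' : Fin (2*k)) (hj : (j:ℕ)/2 = p) (hj' : (j':ℕ)/2 = p) :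
    Rk S (.inl (i,j)) (.inl (i',j')) := by
  have hk : 0 < k := by omega
  -- connect (i,j) to (i, 2p)
  have conn : ∀ (r : Fin k) (c : Fin (2*k)), (c:ℕ)/2 = p →
      Rk S (.inl (r, c)) (.inl (r, (⟨2*p, by omega⟩ : Fin (2*k)))) := by
    intro r c hc
    have : (c:ℕ) = 2*p ∨ (c:ℕ) = 2*p+1 := by omega
    rcases this with h | h
    · have : c = (⟨2*p, by omega⟩ : Fin (2*k)) := Fin.ext h
      rw [this]
      exact Relation.ReflTransGen.refl
    · have : c = (⟨2*p+1, by omega⟩ : Fin (2*k)) := Fin.ext h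
      rw [this]
      exact (pair_flip hp hpk r).symm
  have c1 := conn i j hj
  have c2 := conn i' j' hj'
  have m1 := pair_climb hp hpk (i:ℕ) i.isLt
  have m2 := pair_climb hp hpk (i':ℕ) i'.isLt
  simp only [Fin.eta] at m1 m2
  exact ((c1.trans m1.symm).trans m2).trans c2.symm

lemma wall_to_hub {S : Set (Vk k)} {i₀ p₀ : ℕ} (hi₀ : i₀ < k) (hp₀ : p₀ < k)
    (hsR : SafeR S i₀) (hsP : SafeP S p₀) (i : Fin k) (j : Fin (2*k))
    (h : SafeR S (i:ℕ) ∨ SafeP S ((j:ℕ)/2)) :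
    Rk S (.inl (i,j))
      (.inl ((⟨i₀, hi₀⟩ : Fin k), (⟨2*p₀, by omega⟩ : Fin (2*k)))) := by
  rcases h with h | h
  · exact (row_walk h j ⟨2*p₀, by omega⟩).trans
      (pair_walk hsP hp₀ i ⟨i₀, hi₀⟩ _ _ (by simp [Nat.mul_div_cancel_left])
        (by simp [Nat.mul_div_cancel_left]))
  · have hjk : (j:ℕ)/2 < k := by have := j.isLt; omega
    exact (pair_walk h hjk i ⟨i₀, hi₀⟩ j ⟨2*((j:ℕ)/2), by omega⟩ rfl
      (by simp [Nat.mul_div_cancel_left])).trans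
      (row_walk hsR _ _)

lemma good_to_hub {S : Set (Vk k)} {i₀ p₀ : ℕ} (hi₀ : i₀ < k) (hp₀ : p₀ < k)
    (hsR : SafeR S i₀) (hsP : SafeP S p₀) (v : Vk k)
    (h : (∀ r ∈ rowsV v, SafeR S r) ∨ (∀ p ∈ pairsV v, SafeP S p)) :
    Rk S v (.inl ((⟨i₀, hi₀⟩ : Fin k), (⟨2*p₀, by omega⟩ : Fin (2*k)))) := by
  match v with
  | .inl (i, j) =>
    refine wall_to_hub hi₀ hp₀ hsR hsP i j ?_
    rcases h with h | h
    · exact Or.inl (h _ (by simp [rowsV]))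
    · exact Or.inr (h _ (by simp [pairsV]))
  | .inr e =>
    obtain ⟨u, w, he, hnf⟩ := edge_nf e
    have hrows : rowsV (Sum.inr e : Vk k) = {(u.1:ℕ), (w.1:ℕ)} := by
      simp [rowsV, he]
    have hpairs : pairsV (Sum.inr e : Vk k) = {(u.2:ℕ)/2, (w.2:ℕ)/2} := by
      simp [pairsV, he]
    have hu_mem : u ∈ (e : Sym2 _) := by rw [he]; exact Sym2.mem_mk_left u w
    have hstep : Rk S (.inr e) (.inl u) := by
      have hadj : (OneSubdivision (cylWall k k)).Adj (.inl u) (.inr e) :=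
        (oneSub_adj _ _ _).2 hu_mem
      have heS : (Sum.inr e : Vk k) ∉ S := by
        rcases h with h | h
        · exact (h _ (by rw [hrows]; exact Finset.mem_insert_self _ _)).notMem
            (by rw [hrows]; exact Finset.mem_insert_self _ _)
        · exact (h _ (by rw [hpairs]; exact Finset.mem_insert_self _ _)).notMem
            (by rw [hpairs]; exact Finset.mem_insert_self _ _)
      have huS : (Sum.inl u : Vk k) ∉ S := by
        rcases h with h | h
        · exact (h _ (by rw [hrows]; exact Finset.mem_insert_self _ _)).notMem
            (by simp [rowsV])
        · exact (h _ (by rw [hpairs]; exact Finset.mem_insert_self _ _)).notMem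
            (by simp [pairsV])
      exact Relation.ReflTransGen.single ⟨hadj.symm, heS, huS⟩
    refine hstep.trans (wall_to_hub hi₀ hp₀ hsR hsP u.1 u.2 ?_)
    · rcases h with h | h
      · exact Or.inl (h _ (by rw [hrows]; exact Finset.mem_insert_self _ _))
      · exact Or.inr (h _ (by rw [hpairs]; exact Finset.mem_insert_self _ _))

lemma side_closed {A B : Set (Vk k)}
    (hsep : IsSeparation (OneSubdivision (cylWall k k)) A B) {a b : Vk k}
    (ha : a ∈ A \ B) (h : Rk (A ∩ B) a b) : b ∈ A \ B := by
  induction h with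
  | refl => exact ha
  | tail hxy hstep ih =>
    rename_i x y
    obtain ⟨hadj, hx, hy⟩ := hstep
    have hyu : y ∈ A ∪ B := by rw [hsep.1]; trivial
    rcases hyu with hyA | hyB
    · exact ⟨hyA, fun hyB => hy ⟨hyA, hyB⟩⟩
    · by_cases hyA : y ∈ A
      · exact absurd ⟨hyA, hyB⟩ hy
      · exact absurd ⟨hyB, hyA⟩ (hsep.2 hadj ih)

lemma gmap_mem_bad {TRF TPF : Finset ℕ} {v : Vk k}
    (h1 : ∃ r ∈ rowsV v, r ∈ TRF) (h2 : ∃ p ∈ pairsV v, p ∈ TPF) :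
    gmap v ∈ ((TRF ∪ TRF.image (· - 1)) ×ˢ TPF ×ˢ ({0,1,2,3} : Finset ℕ)) ∪
             (TRF ×ˢ ((TPF ∪ TPF.image (· - 1)) ∪ {0}) ×ˢ ({4,5} : Finset ℕ)) := by
  match v with
  | .inl (i, j) =>
    simp only [rowsV, pairsV, Finset.mem_singleton] at h1 h2
    obtain ⟨r, hr, hrT⟩ := h1
    obtain ⟨p, hp, hpT⟩ := h2
    subst hr; subst hp
    show ((i:ℕ), (j:ℕ)/2, (j:ℕ)%2) ∈ _
    simp only [Finset.mem_union, Finset.mem_product, Finset.mem_insert,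
      Finset.mem_singleton, Finset.mem_image]
    exact Or.inl ⟨Or.inl hrT, hpT, by omega⟩
  | .inr e =>
    obtain ⟨u, w, he, hnf⟩ := edge_nf e
    simp only [rowsV, pairsV, he, rowsE_mk, pairsE_mk, Finset.mem_insert,
      Finset.mem_singleton] at h1 h2
    obtain ⟨r, hr, hrT⟩ := h1
    obtain ⟨p, hp, hpT⟩ := h2
    have hgm : gmap (Sum.inr e : Vk k) = (min (u.1:ℕ) (w.1:ℕ), min (u.2:ℕ) (w.2:ℕ) / 2,
        if max (u.2:ℕ) (w.2:ℕ) - min (u.2:ℕ) (w.2:ℕ) = 0 then 3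
        else if max (u.2:ℕ) (w.2:ℕ) - min (u.2:ℕ) (w.2:ℕ) = 1 then
          (if min (u.2:ℕ) (w.2:ℕ) % 2 = 0 then 2 else 4)
        else 5) := by
      simp only [gmap, he, minRowE_mk, cMinE_mk, cMaxE_mk]
    have hu2 := (u.2).isLt
    have hw2 := (w.2).isLt
    rcases hnf with ⟨ha, hb | ⟨hk1, hb, hb'⟩⟩ | ⟨ha, hb, hpar⟩
    · -- horizontal edge, w.2 = u.2 + 1
      have hmin : min (u.1:ℕ) (w.1:ℕ) = r := by rcases hr with hr | hr <;> omega
      rcases Nat.even_or_odd (u.2:ℕ) with ⟨t, htt⟩ | ⟨t, htt⟩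
      · -- within a pair : tag 2
        have ht : (if max (u.2:ℕ) (w.2:ℕ) - min (u.2:ℕ) (w.2:ℕ) = 0 then 3
            else if max (u.2:ℕ) (w.2:ℕ) - min (u.2:ℕ) (w.2:ℕ) = 1 then
              (if min (u.2:ℕ) (w.2:ℕ) % 2 = 0 then 2 else 4) else 5) = 2 := by
          split_ifs <;> omega
        rw [hgm, ht, hmin]
        simp only [Finset.mem_union, Finset.mem_product, Finset.mem_insert,
          Finset.mem_singleton, Finset.mem_image, or_true, true_or, and_true]
        refine Or.inl ⟨Or.inl hrT, ?_⟩
        have : min (u.2:ℕ) (w.2:ℕ) / 2 = p := by rcases hp with hp | hp <;> omega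
        rw [this]; exact hpT
      · -- crossing pairs : tag 4
        have ht : (if max (u.2:ℕ) (w.2:ℕ) - min (u.2:ℕ) (w.2:ℕ) = 0 then 3
            else if max (u.2:ℕ) (w.2:ℕ) - min (u.2:ℕ) (w.2:ℕ) = 1 then
              (if min (u.2:ℕ) (w.2:ℕ) % 2 = 0 then 2 else 4) else 5) = 4 := by
          split_ifs <;> omega
        rw [hgm, ht, hmin]
        simp only [Finset.mem_union, Finset.mem_product, Finset.mem_insert,
          Finset.mem_singleton, Finset.mem_image, or_true, true_or, and_true]
        refine Or.inr ⟨hrT, ?_⟩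
        rcases hp with hp | hp
        · refine Or.inl (Or.inl ?_)
          have : min (u.2:ℕ) (w.2:ℕ) / 2 = p := by omega
          rw [this]; exact hpT
        · refine Or.inl (Or.inr ⟨p, hpT, ?_⟩)
          have hmm : min (u.2:ℕ) (w.2:ℕ) = (u.2:ℕ) := by omega
          rw [hmm]; omega
    · -- wrap edge : tag 5
      have hmin : min (u.1:ℕ) (w.1:ℕ) = r := by rcases hr with hr | hr <;> omega
      have ht : (if max (u.2:ℕ) (w.2:ℕ) - min (u.2:ℕ) (w.2:ℕ) = 0 then 3
          else if max (u.2:ℕ) (w.2:ℕ) - min (u.2:ℕ) (w.2:ℕ) = 1 then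
            (if min (u.2:ℕ) (w.2:ℕ) % 2 = 0 then 2 else 4) else 5) = 5 := by
        split_ifs <;> omega
      rw [hgm, ht, hmin]
      simp only [Finset.mem_union, Finset.mem_product, Finset.mem_insert,
        Finset.mem_singleton, Finset.mem_image, or_true, true_or, and_true]
      exact Or.inr ⟨hrT, Or.inr (by omega)⟩
    · -- vertical edge : tag 3
      have ht : (if max (u.2:ℕ) (w.2:ℕ) - min (u.2:ℕ) (w.2:ℕ) = 0 then 3
          else if max (u.2:ℕ) (w.2:ℕ) - min (u.2:ℕ) (w.2:ℕ) = 1 then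
            (if min (u.2:ℕ) (w.2:ℕ) % 2 = 0 then 2 else 4) else 5) = 3 := by
        split_ifs <;> omega
      rw [hgm, ht]
      simp only [Finset.mem_union, Finset.mem_product, Finset.mem_insert,
        Finset.mem_singleton, Finset.mem_image, or_true, true_or, and_true]
      refine Or.inl ⟨?_, ?_⟩
      · rcases hr with hr | hr
        · left
          have : min (u.1:ℕ) (w.1:ℕ) = r := by omega
          rw [this]; exact hrT
        · refine Or.inr ⟨r, hrT, ?_⟩
          have hmm : min (u.1:ℕ) (w.1:ℕ) = (u.1:ℕ) := by omega
          rw [hmm]; omega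
      · have : min (u.2:ℕ) (w.2:ℕ) / 2 = p := by rcases hp with hp | hp <;> omega
        rw [this]; exact hpT

lemma rowsV_card (v : Vk k) : (rowsV v).card ≤ 2 := by
  match v with
  | .inl (i,j) => simp [rowsV]
  | .inr e =>
    obtain ⟨u, w, he, -⟩ := edge_nf e
    show (rowsE e.val).card ≤ 2
    rw [show e.val = s(u,w) from he, rowsE_mk]
    exact (Finset.card_insert_le _ _).trans (by simp)

lemma pairsV_card (v : Vk k) : (pairsV v).card ≤ 2 := by
  match v with
  | .inl (i,j) => simp [pairsV]
  | .inr e =>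
    obtain ⟨u, w, he, -⟩ := edge_nf e
    show (pairsE e.val).card ≤ 2
    rw [show e.val = s(u,w) from he, pairsE_mk]
    exact (Finset.card_insert_le _ _).trans (by simp)


end SubdivCylWallAux

open SubdivCylWallAux in
/-- The 1-subdivision of the elementary cylindrical wall of height `k` and width `k`
is `(100ℓ², ℓ)`-unbreakable whenever `10ℓ ≤ k`. -/
theorem subdivided_cylWall_unbreakable (k ℓ : ℕ) (hk : 1 ≤ k) (hℓ : 10 * ℓ ≤ k) :
    Unbreakable (OneSubdivision (cylWall k k)) (100 * ℓ ^ 2) ℓ := by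
  intro A B hsep hord
  by_contra hcon
  push_neg at hcon
  obtain ⟨hA, hB⟩ := hcon
  classical
  set S : Set (Vk k) := A ∩ B with hSdef
  have hSfin : S.Finite := Set.toFinite _
  have hScard : hSfin.toFinset.card ≤ ℓ := by
    rwa [← Set.ncard_eq_toFinset_card]
  set TRF := hSfin.toFinset.biUnion rowsV with hTRF
  set TPF := hSfin.toFinset.biUnion pairsV with hTPF
  have hTRcard : TRF.card ≤ 2*ℓ := by
    calc TRF.card ≤ ∑ v ∈ hSfin.toFinset, (rowsV v).card := Finset.card_biUnion_le
    _ ≤ ∑ _v ∈ hSfin.toFinset, 2 := Finset.sum_le_sum (fun v _ => rowsV_card v)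
    _ = hSfin.toFinset.card * 2 := by rw [Finset.sum_const, smul_eq_mul]
    _ ≤ 2*ℓ := by omega
  have hTPcard : TPF.card ≤ 2*ℓ := by
    calc TPF.card ≤ ∑ v ∈ hSfin.toFinset, (pairsV v).card := Finset.card_biUnion_le
    _ ≤ ∑ _v ∈ hSfin.toFinset, 2 := Finset.sum_le_sum (fun v _ => pairsV_card v)
    _ = hSfin.toFinset.card * 2 := by rw [Finset.sum_const, smul_eq_mul]
    _ ≤ 2*ℓ := by omega
  have h2lk : 2*ℓ < k := by omega
  have hexR : ∃ n, n < k ∧ n ∉ TRF := by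
    by_contra h
    push_neg at h
    have hsub : Finset.range k ⊆ TRF := fun n hn => h n (Finset.mem_range.1 hn)
    have := Finset.card_le_card hsub
    rw [Finset.card_range] at this
    omega
  have hexP : ∃ n, n < k ∧ n ∉ TPF := by
    by_contra h
    push_neg at h
    have hsub : Finset.range k ⊆ TPF := fun n hn => h n (Finset.mem_range.1 hn)
    have := Finset.card_le_card hsub
    rw [Finset.card_range] at this
    omega
  obtain ⟨i₀, hi₀k, hi₀⟩ := hexR
  obtain ⟨p₀, hp₀k, hp₀⟩ := hexP
  have hSafeR : ∀ n, n ∉ TRF → SafeR S n := by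
    intro n hn v hv hmem
    exact hn (Finset.mem_biUnion.2 ⟨v, hSfin.mem_toFinset.2 hv, hmem⟩)
  have hSafeP : ∀ n, n ∉ TPF → SafeP S n := by
    intro n hn v hv hmem
    exact hn (Finset.mem_biUnion.2 ⟨v, hSfin.mem_toFinset.2 hv, hmem⟩)
  set Bad : Set (Vk k) := {v | (∃ r ∈ rowsV v, r ∈ TRF) ∧ (∃ p ∈ pairsV v, p ∈ TPF)}
    with hBadDef
  set hub : Vk k := .inl ((⟨i₀, hi₀k⟩ : Fin k), (⟨2*p₀, by omega⟩ : Fin (2*k))) with hhub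
  have hreach : ∀ v : Vk k, v ∉ Bad → Rk S v hub := by
    intro v hv
    rw [hBadDef, Set.mem_setOf_eq, not_and_or] at hv
    refine good_to_hub hi₀k hp₀k (hSafeR _ hi₀) (hSafeP _ hp₀) v ?_
    rcases hv with hv | hv
    · push_neg at hv
      exact Or.inl (fun r hr => hSafeR _ (hv r hr))
    · push_neg at hv
      exact Or.inr (fun p hp => hSafeP _ (hv p hp))
  set T : Finset (ℕ×ℕ×ℕ) :=
    ((TRF ∪ TRF.image (· - 1)) ×ˢ TPF ×ˢ ({0,1,2,3} : Finset ℕ)) ∪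
    (TRF ×ˢ ((TPF ∪ TPF.image (· - 1)) ∪ {0}) ×ˢ ({4,5} : Finset ℕ)) with hT
  have hBadT : Bad.ncard ≤ T.card := by
    have himg : gmap '' Bad ⊆ ↑T := by
      rintro x ⟨v, hv, rfl⟩
      exact gmap_mem_bad hv.1 hv.2
    calc Bad.ncard = (gmap '' Bad).ncard :=
          (Set.ncard_image_of_injective _ gmap_injective).symm
    _ ≤ (↑T : Set (ℕ×ℕ×ℕ)).ncard := Set.ncard_le_ncard himg (Set.toFinite _)
    _ = T.card := Set.ncard_coe_finset T
  have hTcard : T.card ≤ 48*(ℓ*ℓ) + 4*ℓ := by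
    have h1 : ((TRF ∪ TRF.image (· - 1)) ×ˢ TPF ×ˢ ({0,1,2,3} : Finset ℕ)).card
        ≤ (4*ℓ) * ((2*ℓ) * 4) := by
      rw [Finset.card_product, Finset.card_product]
      have ha : (TRF ∪ TRF.image (· - 1)).card ≤ 4*ℓ := by
        have := Finset.card_union_le TRF (TRF.image (· - 1))
        have := Finset.card_image_le (f := (· - 1)) (s := TRF)
        omega
      have hb : ({0,1,2,3} : Finset ℕ).card ≤ 4 := by decide
      exact Nat.mul_le_mul ha (Nat.mul_le_mul hTPcard hb)
    have h2 : (TRF ×ˢ ((TPF ∪ TPF.image (· - 1)) ∪ {0}) ×ˢ ({4,5} : Finset ℕ)).card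
        ≤ (2*ℓ) * ((4*ℓ+1) * 2) := by
      rw [Finset.card_product, Finset.card_product]
      have ha : ((TPF ∪ TPF.image (· - 1)) ∪ {0}).card ≤ 4*ℓ+1 := by
        have h3 := Finset.card_union_le (TPF ∪ TPF.image (· - 1)) ({0} : Finset ℕ)
        have h4 := Finset.card_union_le TPF (TPF.image (· - 1))
        have h5 := Finset.card_image_le (f := (· - 1)) (s := TPF)
        have h6 : ({0} : Finset ℕ).card = 1 := rfl
        omega
      have hb : ({4,5} : Finset ℕ).card ≤ 2 := by decide
      exact Nat.mul_le_mul hTRcard (Nat.mul_le_mul ha hb)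
    calc T.card ≤ _ := Finset.card_union_le _ _
    _ ≤ (4*ℓ) * ((2*ℓ) * 4) + (2*ℓ) * ((4*ℓ+1) * 2) := by omega
    _ ≤ 48*(ℓ*ℓ) + 4*ℓ := by ring_nf; omega
  have hA' : 100*(ℓ*ℓ) < A.ncard := by
    have : ℓ^2 = ℓ*ℓ := sq ℓ
    omega
  have hB' : 100*(ℓ*ℓ) < B.ncard := by
    have : ℓ^2 = ℓ*ℓ := sq ℓ
    omega
  have hll : ℓ ≤ ℓ*ℓ := by nlinarith
  have hAsplit : A.ncard ≤ (A\B).ncard + ℓ := by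
    have h1 : A = (A\B) ∪ S := by rw [hSdef, Set.diff_union_inter]
    calc A.ncard = ((A\B) ∪ S).ncard := by rw [← h1]
    _ ≤ (A\B).ncard + S.ncard := Set.ncard_union_le _ _
    _ ≤ (A\B).ncard + ℓ := by omega
  have hBsplit : B.ncard ≤ (B\A).ncard + ℓ := by
    have h1 : B = (B\A) ∪ S := by rw [hSdef, Set.inter_comm, Set.diff_union_inter]
    calc B.ncard = ((B\A) ∪ S).ncard := by rw [← h1]
    _ ≤ (B\A).ncard + S.ncard := Set.ncard_union_le _ _
    _ ≤ (B\A).ncard + ℓ := by omega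
  have hnsubA : ¬ (A \ B ⊆ Bad) := by
    intro hsub
    have := Set.ncard_le_ncard hsub (Set.toFinite _)
    omega
  have hnsubB : ¬ (B \ A ⊆ Bad) := by
    intro hsub
    have := Set.ncard_le_ncard hsub (Set.toFinite _)
    omega
  obtain ⟨a, haA, haBad⟩ := Set.not_subset.1 hnsubA
  obtain ⟨b, hbB, hbBad⟩ := Set.not_subset.1 hnsubB
  have rab : Rk S a b := (hreach a haBad).trans (hreach b hbBad).symm
  have hbA : b ∈ A \ B := side_closed hsep haA rab
  exact hbB.2 hbA.1
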